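/- Let H be a real symmetric positive definite 2×2 matrix whose entries satisfy the reduction conditions 0 ≤ 2H₀₁ ≤ H₀₀ ≤ H₁₁ (Lagrange/LLL-reduced Gram matrix). Then the cardinality of the set O(Λ) = { U ∈ GL₂(ℤ) : (↑U)ᵀ H (↑U) = H }, where ↑U denotes the real matrix obtained from the integer matrix U by coercing entries, belongs to {2, 4, 8, 12}. -/

import Mathlib

open Matrix

/-- The point group `O(Λ)` of a rank-2 lattice with Gram matrix `H`: integer `2×2`
matrices of determinant `±1` preserving `H` (via real coercion of entries). -/
def latticePointGroup (H : Matrix (Fin 2) (Fin 2) ℝ) : Set (Matrix (Fin 2) (Fin 2) ℤ) :=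
  {U | (U.det = 1 ∨ U.det = -1) ∧
        (U.map (Int.cast : ℤ → ℝ))ᵀ * H * U.map (Int.cast : ℤ → ℝ) = H}


lemma mem_iff (H : Matrix (Fin 2) (Fin 2) ℝ) (hsymm : H 1 0 = H 0 1) (U : Matrix (Fin 2) (Fin 2) ℤ) :
    U ∈ latticePointGroup H ↔
    (U 0 0 * U 1 1 - U 0 1 * U 1 0 = 1 ∨ U 0 0 * U 1 1 - U 0 1 * U 1 0 = -1) ∧
    H 0 0 * (U 0 0 : ℝ)^2 + 2 * H 0 1 * (U 0 0 : ℝ) * (U 1 0 : ℝ) + H 1 1 * (U 1 0 : ℝ)^2 = H 0 0 ∧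
    H 0 0 * (U 0 0 : ℝ) * (U 0 1 : ℝ) + H 0 1 * ((U 0 0 : ℝ) * (U 1 1 : ℝ) + (U 1 0 : ℝ) * (U 0 1 : ℝ)) + H 1 1 * (U 1 0 : ℝ) * (U 1 1 : ℝ) = H 0 1 ∧
    H 0 0 * (U 0 1 : ℝ)^2 + 2 * H 0 1 * (U 0 1 : ℝ) * (U 1 1 : ℝ) + H 1 1 * (U 1 1 : ℝ)^2 = H 1 1 := by
  simp only [latticePointGroup, Set.mem_setOf_eq, Matrix.det_fin_two, ← Matrix.ext_iff,
    Fin.forall_fin_two, mul_apply, Fin.sum_univ_two, map_apply, transpose_apply, hsymm]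
  constructor
  · rintro ⟨hd, ⟨e1, e2⟩, _, e4⟩
    exact ⟨hd, by linear_combination e1, by linear_combination e2, by linear_combination e4⟩
  · rintro ⟨hd, e1, e2, e3⟩
    exact ⟨hd, ⟨by linear_combination e1, by linear_combination e2⟩,
      by linear_combination e2, by linear_combination e3⟩

lemma col0 {a b c : ℝ} (ha : 0 < a) (hc : 0 < c) (h1 : 0 ≤ 2*b) (h2 : 2*b ≤ a) (h3 : a ≤ c)
    (x y : ℤ)
    (heq : a*(x:ℝ)^2 + 2*b*(x:ℝ)*(y:ℝ) + c*(y:ℝ)^2 = a) :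
    (x = 1 ∧ y = 0) ∨ (x = -1 ∧ y = 0) ∨
    (x = 0 ∧ y = 1 ∧ a = c) ∨ (x = 0 ∧ y = -1 ∧ a = c) ∨
    (x = 1 ∧ y = -1 ∧ a = c ∧ a = 2*b) ∨ (x = -1 ∧ y = 1 ∧ a = c ∧ a = 2*b) := by
  have hd : a*c - b^2 > 0 := by nlinarith
  have small : ∀ z : ℤ, ((z:ℝ))^2 < 2 → z = -1 ∨ z = 0 ∨ z = 1 := by
    intro z h
    have h2' : ((z^2 : ℤ) : ℝ) < 2 := by push_cast; exact h
    have h3' : z^2 < 2 := by exact_mod_cast h2'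
    have : -1 ≤ z ∧ z ≤ 1 := by constructor <;> nlinarith
    omega
  have hx : x = -1 ∨ x = 0 ∨ x = 1 := by
    apply small
    have key : (c*(y:ℝ) + b*(x:ℝ))^2 + (a*c - b^2)*(x:ℝ)^2 = c*a := by linear_combination c * heq
    nlinarith [sq_nonneg (c*(y:ℝ) + b*(x:ℝ)), sq_nonneg (x:ℝ)]
  have hy : y = -1 ∨ y = 0 ∨ y = 1 := by
    apply small
    have key : (a*(x:ℝ) + b*(y:ℝ))^2 + (a*c - b^2)*(y:ℝ)^2 = a*a := by linear_combination a * heq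
    nlinarith [sq_nonneg (a*(x:ℝ) + b*(y:ℝ)), sq_nonneg (y:ℝ)]
  rcases hx with hx | hx | hx <;> rcases hy with hy | hy | hy <;>
    subst hx <;> subst hy <;> push_cast at heq <;> norm_num at heq ⊢ <;>
    first
      | (constructor <;> linarith)
      | linarith

lemma col1 {a b c : ℝ} (ha : 0 < a) (hc : 0 < c) (h1 : 0 ≤ 2*b) (h2 : 2*b ≤ a) (h3 : a ≤ c)
    (x y p q : ℤ)
    (hdet : x*q - p*y = 1 ∨ x*q - p*y = -1)
    (hy : y = -1 ∨ y = 0 ∨ y = 1)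
    (heq : a*(p:ℝ)^2 + 2*b*(p:ℝ)*(q:ℝ) + c*(q:ℝ)^2 = c) :
    (p = 0 ∧ q = 1) ∨ (p = 0 ∧ q = -1) ∨
    (p = -1 ∧ q = 1 ∧ a = 2*b) ∨ (p = 1 ∧ q = -1 ∧ a = 2*b) ∨
    (q = 0 ∧ (p = 1 ∨ p = -1) ∧ a = c) := by
  have hd : a*c - b^2 > 0 := by nlinarith
  have hb : 0 ≤ b := by linarith
  have hq : q = -1 ∨ q = 0 ∨ q = 1 := by
    have key : (a*(p:ℝ) + b*(q:ℝ))^2 + (a*c - b^2)*(q:ℝ)^2 = a*c := by linear_combination a * heq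
    have hlt : ((q:ℝ))^2 < 2 := by
      nlinarith [sq_nonneg (a*(p:ℝ) + b*(q:ℝ)), sq_nonneg (q:ℝ)]
    have h2' : ((q^2 : ℤ) : ℝ) < 2 := by push_cast; exact hlt
    have h3' : q^2 < 2 := by exact_mod_cast h2'
    have : -1 ≤ q ∧ q ≤ 1 := by constructor <;> nlinarith
    omega
  rcases hq with hq | hq | hq
  · subst hq
    push_cast at heq
    have hkey : a*(p:ℝ)^2 - 2*b*(p:ℝ) = 0 := by linarith
    have hp : p = 0 ∨ p = 1 := by
      rcases lt_trichotomy p 0 with h | h | h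
      · exfalso
        have hp1 : (p:ℝ) ≤ -1 := by exact_mod_cast (show p ≤ -1 by omega)
        have hsq : (1:ℝ) ≤ (p:ℝ)^2 := by nlinarith
        nlinarith [mul_nonneg (show (0:ℝ) ≤ 2*b by linarith) (show (0:ℝ) ≤ -(p:ℝ) by linarith),
          mul_le_mul_of_nonneg_left hsq ha.le]
      · left; exact h
      · right
        by_contra hne
        have hp2 : (2:ℝ) ≤ (p:ℝ) := by exact_mod_cast (show (2:ℤ) ≤ p by omega)
        nlinarith [mul_le_mul_of_nonneg_left hp2 ha.le,
          mul_pos (show (0:ℝ) < (p:ℝ) by linarith)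
            (show (0:ℝ) < a*(p:ℝ) - 2*b by nlinarith)]
    rcases hp with hp | hp
    · right; left; exact ⟨hp, rfl⟩
    · right; right; right; left
      subst hp
      norm_num at hkey
      exact ⟨rfl, rfl, by linarith⟩
  · subst hq
    push_cast at heq
    norm_num at heq hdet
    have hpy : p*y = -1 ∨ p*y = 1 := by
      rcases hdet with h | h
      · left; linarith
      · right; linarith
    rcases hy with rfl | rfl | rfl
    · have hp : p = 1 ∨ p = -1 := by omega
      have hac : a = c := by
        rcases hp with rfl | rfl
        · push_cast at heq; linarith
        · push_cast at heq; linarith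
      exact Or.inr (Or.inr (Or.inr (Or.inr ⟨rfl, hp, hac⟩)))
    · simp at hpy
    · have hp : p = 1 ∨ p = -1 := by omega
      have hac : a = c := by
        rcases hp with rfl | rfl
        · push_cast at heq; linarith
        · push_cast at heq; linarith
      exact Or.inr (Or.inr (Or.inr (Or.inr ⟨rfl, hp, hac⟩)))
  · subst hq
    push_cast at heq
    have hkey : a*(p:ℝ)^2 + 2*b*(p:ℝ) = 0 := by linarith
    have hp : p = 0 ∨ p = -1 := by
      rcases lt_trichotomy p 0 with h | h | h
      · right
        by_contra hne
        have hp2 : (p:ℝ) ≤ -2 := by exact_mod_cast (show p ≤ -2 by omega)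
        nlinarith [mul_pos (show (0:ℝ) < -(p:ℝ) by linarith)
            (show (0:ℝ) < -(a*(p:ℝ)) - 2*b by nlinarith)]
      · left; exact h
      · exfalso
        have hp1 : (1:ℝ) ≤ (p:ℝ) := by exact_mod_cast (show (1:ℤ) ≤ p by omega)
        have hsq : (1:ℝ) ≤ (p:ℝ)^2 := by nlinarith
        nlinarith [mul_nonneg (show (0:ℝ) ≤ 2*b by linarith) (show (0:ℝ) ≤ (p:ℝ) by linarith),
          mul_le_mul_of_nonneg_left hsq ha.le]
    rcases hp with hp | hp
    · left; exact ⟨hp, rfl⟩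
    · right; right; left
      subst hp
      norm_num at hkey
      exact ⟨rfl, rfl, by linarith⟩

lemma case_generic (H : Matrix (Fin 2) (Fin 2) ℝ) (hsymm : H 1 0 = H 0 1)
    (ha : 0 < H 0 0) (hc : 0 < H 1 1)
    (h1 : 0 ≤ 2 * H 0 1) (h2 : 2 * H 0 1 ≤ H 0 0) (h3 : H 0 0 ≤ H 1 1)
    (hb : 0 < H 0 1) (hba : 2 * H 0 1 < H 0 0) (hac : H 0 0 < H 1 1) :
    latticePointGroup H = ↑({!![1,0;0,1], !![-1,0;0,-1]} : Finset (Matrix (Fin 2) (Fin 2) ℤ)) := by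
  ext U
  simp only [Finset.coe_insert, Set.mem_insert_iff, Finset.coe_singleton, Set.mem_singleton_iff]
  rw [mem_iff H hsymm]
  constructor
  · rintro ⟨hdet, e1, e2, e3⟩
    have hcol0 := col0 ha hc h1 h2 h3 (U 0 0) (U 1 0) e1
    have hy : U 1 0 = -1 ∨ U 1 0 = 0 ∨ U 1 0 = 1 := by
      rcases hcol0 with ⟨-,h⟩|⟨-,h⟩|⟨-,h,-⟩|⟨-,h,-⟩|⟨-,h,-⟩|⟨-,h,-⟩ <;> omega
    have hcol1 := col1 ha hc h1 h2 h3 (U 0 0) (U 1 0) (U 0 1) (U 1 1) hdet hy e3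
    have hU := Matrix.eta_fin_two U
    rcases hcol0 with ⟨hx,hyy⟩|⟨hx,hyy⟩|⟨hx,hyy,hac1⟩|⟨hx,hyy,hac1⟩|⟨hx,hyy,hac1,hab1⟩|⟨hx,hyy,hac1,hab1⟩ <;>
      rcases hcol1 with ⟨hp,hqq⟩|⟨hp,hqq⟩|⟨hp,hqq,hab2⟩|⟨hp,hqq,hab2⟩|⟨hqq,(hp|hp),hac2⟩ <;>
      rw [hx, hyy, hp, hqq] at hU e2 hdet <;>
      first
        | (exfalso; linarith)
        | (exfalso; omega)
        | (exfalso; push_cast at e2; linarith)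
        | (rw [hU]; decide)
  · rintro (rfl | rfl) <;> refine ⟨by norm_num, ?_, ?_, ?_⟩ <;> push_cast <;> norm_num

lemma case_rect (H : Matrix (Fin 2) (Fin 2) ℝ) (hsymm : H 1 0 = H 0 1)
    (ha : 0 < H 0 0) (hc : 0 < H 1 1)
    (h1 : 0 ≤ 2 * H 0 1) (h2 : 2 * H 0 1 ≤ H 0 0) (h3 : H 0 0 ≤ H 1 1)
    (hb : H 0 1 = 0) (hac : H 0 0 < H 1 1) :
    latticePointGroup H = ↑({!![1,0;0,1], !![-1,0;0,-1], !![1,0;0,-1], !![-1,0;0,1]} : Finset (Matrix (Fin 2) (Fin 2) ℤ)) := by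
  ext U
  simp only [Finset.coe_insert, Set.mem_insert_iff, Finset.coe_singleton, Set.mem_singleton_iff]
  rw [mem_iff H hsymm]
  constructor
  · rintro ⟨hdet, e1, e2, e3⟩
    have hcol0 := col0 ha hc h1 h2 h3 (U 0 0) (U 1 0) e1
    have hy : U 1 0 = -1 ∨ U 1 0 = 0 ∨ U 1 0 = 1 := by
      rcases hcol0 with ⟨-,h⟩|⟨-,h⟩|⟨-,h,-⟩|⟨-,h,-⟩|⟨-,h,-⟩|⟨-,h,-⟩ <;> omega
    have hcol1 := col1 ha hc h1 h2 h3 (U 0 0) (U 1 0) (U 0 1) (U 1 1) hdet hy e3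
    have hU := Matrix.eta_fin_two U
    rcases hcol0 with ⟨hx,hyy⟩|⟨hx,hyy⟩|⟨hx,hyy,hac1⟩|⟨hx,hyy,hac1⟩|⟨hx,hyy,hac1,hab1⟩|⟨hx,hyy,hac1,hab1⟩ <;>
      rcases hcol1 with ⟨hp,hqq⟩|⟨hp,hqq⟩|⟨hp,hqq,hab2⟩|⟨hp,hqq,hab2⟩|⟨hqq,(hp|hp),hac2⟩ <;>
      rw [hx, hyy, hp, hqq] at hU e2 hdet <;>
      first
        | (exfalso; linarith)
        | (exfalso; omega)
        | (exfalso; push_cast at e2; linarith)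
        | (rw [hU]; decide)
  · rintro (rfl | rfl | rfl | rfl) <;>
      refine ⟨by decide, ?_, ?_, ?_⟩ <;> norm_num <;> linarith

lemma case_square (H : Matrix (Fin 2) (Fin 2) ℝ) (hsymm : H 1 0 = H 0 1)
    (ha : 0 < H 0 0) (hc : 0 < H 1 1)
    (h1 : 0 ≤ 2 * H 0 1) (h2 : 2 * H 0 1 ≤ H 0 0) (h3 : H 0 0 ≤ H 1 1)
    (hb : H 0 1 = 0) (hac : H 0 0 = H 1 1) :
    latticePointGroup H = ↑({!![1,0;0,1], !![-1,0;0,-1], !![1,0;0,-1], !![-1,0;0,1], !![0,1;1,0], !![0,-1;-1,0], !![0,-1;1,0], !![0,1;-1,0]} : Finset (Matrix (Fin 2) (Fin 2) ℤ)) := by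
  ext U
  simp only [Finset.coe_insert, Set.mem_insert_iff, Finset.coe_singleton, Set.mem_singleton_iff]
  rw [mem_iff H hsymm]
  constructor
  · rintro ⟨hdet, e1, e2, e3⟩
    have hcol0 := col0 ha hc h1 h2 h3 (U 0 0) (U 1 0) e1
    have hy : U 1 0 = -1 ∨ U 1 0 = 0 ∨ U 1 0 = 1 := by
      rcases hcol0 with ⟨-,h⟩|⟨-,h⟩|⟨-,h,-⟩|⟨-,h,-⟩|⟨-,h,-⟩|⟨-,h,-⟩ <;> omega
    have hcol1 := col1 ha hc h1 h2 h3 (U 0 0) (U 1 0) (U 0 1) (U 1 1) hdet hy e3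
    have hU := Matrix.eta_fin_two U
    rcases hcol0 with ⟨hx,hyy⟩|⟨hx,hyy⟩|⟨hx,hyy,hac1⟩|⟨hx,hyy,hac1⟩|⟨hx,hyy,hac1,hab1⟩|⟨hx,hyy,hac1,hab1⟩ <;>
      rcases hcol1 with ⟨hp,hqq⟩|⟨hp,hqq⟩|⟨hp,hqq,hab2⟩|⟨hp,hqq,hab2⟩|⟨hqq,(hp|hp),hac2⟩ <;>
      rw [hx, hyy, hp, hqq] at hU e2 hdet <;>
      first
        | (exfalso; linarith)
        | (exfalso; omega)
        | (exfalso; push_cast at e2; linarith)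
        | (rw [hU]; decide)
  · rintro (rfl | rfl | rfl | rfl | rfl | rfl | rfl | rfl) <;>
      refine ⟨by decide, ?_, ?_, ?_⟩ <;> norm_num <;> linarith

lemma case_centered (H : Matrix (Fin 2) (Fin 2) ℝ) (hsymm : H 1 0 = H 0 1)
    (ha : 0 < H 0 0) (hc : 0 < H 1 1)
    (h1 : 0 ≤ 2 * H 0 1) (h2 : 2 * H 0 1 ≤ H 0 0) (h3 : H 0 0 ≤ H 1 1)
    (hb : 0 < H 0 1) (hba : 2 * H 0 1 = H 0 0) (hac : H 0 0 < H 1 1) :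
    latticePointGroup H = ↑({!![1,0;0,1], !![-1,0;0,-1], !![1,1;0,-1], !![-1,-1;0,1]} : Finset (Matrix (Fin 2) (Fin 2) ℤ)) := by
  ext U
  simp only [Finset.coe_insert, Set.mem_insert_iff, Finset.coe_singleton, Set.mem_singleton_iff]
  rw [mem_iff H hsymm]
  constructor
  · rintro ⟨hdet, e1, e2, e3⟩
    have hcol0 := col0 ha hc h1 h2 h3 (U 0 0) (U 1 0) e1
    have hy : U 1 0 = -1 ∨ U 1 0 = 0 ∨ U 1 0 = 1 := by
      rcases hcol0 with ⟨-,h⟩|⟨-,h⟩|⟨-,h,-⟩|⟨-,h,-⟩|⟨-,h,-⟩|⟨-,h,-⟩ <;> omega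
    have hcol1 := col1 ha hc h1 h2 h3 (U 0 0) (U 1 0) (U 0 1) (U 1 1) hdet hy e3
    have hU := Matrix.eta_fin_two U
    rcases hcol0 with ⟨hx,hyy⟩|⟨hx,hyy⟩|⟨hx,hyy,hac1⟩|⟨hx,hyy,hac1⟩|⟨hx,hyy,hac1,hab1⟩|⟨hx,hyy,hac1,hab1⟩ <;>
      rcases hcol1 with ⟨hp,hqq⟩|⟨hp,hqq⟩|⟨hp,hqq,hab2⟩|⟨hp,hqq,hab2⟩|⟨hqq,(hp|hp),hac2⟩ <;>
      rw [hx, hyy, hp, hqq] at hU e2 hdet <;>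
      first
        | (exfalso; linarith)
        | (exfalso; omega)
        | (exfalso; push_cast at e2; linarith)
        | (rw [hU]; decide)
  · rintro (rfl | rfl | rfl | rfl) <;>
      refine ⟨by decide, ?_, ?_, ?_⟩ <;> norm_num <;> linarith

lemma case_rhombic (H : Matrix (Fin 2) (Fin 2) ℝ) (hsymm : H 1 0 = H 0 1)
    (ha : 0 < H 0 0) (hc : 0 < H 1 1)
    (h1 : 0 ≤ 2 * H 0 1) (h2 : 2 * H 0 1 ≤ H 0 0) (h3 : H 0 0 ≤ H 1 1)
    (hb : 0 < H 0 1) (hba : 2 * H 0 1 < H 0 0) (hac : H 0 0 = H 1 1) :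
    latticePointGroup H = ↑({!![1,0;0,1], !![-1,0;0,-1], !![0,1;1,0], !![0,-1;-1,0]} : Finset (Matrix (Fin 2) (Fin 2) ℤ)) := by
  ext U
  simp only [Finset.coe_insert, Set.mem_insert_iff, Finset.coe_singleton, Set.mem_singleton_iff]
  rw [mem_iff H hsymm]
  constructor
  · rintro ⟨hdet, e1, e2, e3⟩
    have hcol0 := col0 ha hc h1 h2 h3 (U 0 0) (U 1 0) e1
    have hy : U 1 0 = -1 ∨ U 1 0 = 0 ∨ U 1 0 = 1 := by
      rcases hcol0 with ⟨-,h⟩|⟨-,h⟩|⟨-,h,-⟩|⟨-,h,-⟩|⟨-,h,-⟩|⟨-,h,-⟩ <;> omega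
    have hcol1 := col1 ha hc h1 h2 h3 (U 0 0) (U 1 0) (U 0 1) (U 1 1) hdet hy e3
    have hU := Matrix.eta_fin_two U
    rcases hcol0 with ⟨hx,hyy⟩|⟨hx,hyy⟩|⟨hx,hyy,hac1⟩|⟨hx,hyy,hac1⟩|⟨hx,hyy,hac1,hab1⟩|⟨hx,hyy,hac1,hab1⟩ <;>
      rcases hcol1 with ⟨hp,hqq⟩|⟨hp,hqq⟩|⟨hp,hqq,hab2⟩|⟨hp,hqq,hab2⟩|⟨hqq,(hp|hp),hac2⟩ <;>
      rw [hx, hyy, hp, hqq] at hU e2 hdet <;>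
      first
        | (exfalso; linarith)
        | (exfalso; omega)
        | (exfalso; push_cast at e2; linarith)
        | (rw [hU]; decide)
  · rintro (rfl | rfl | rfl | rfl) <;>
      refine ⟨by decide, ?_, ?_, ?_⟩ <;> norm_num <;> linarith

lemma case_hex (H : Matrix (Fin 2) (Fin 2) ℝ) (hsymm : H 1 0 = H 0 1)
    (ha : 0 < H 0 0) (hc : 0 < H 1 1)
    (h1 : 0 ≤ 2 * H 0 1) (h2 : 2 * H 0 1 ≤ H 0 0) (h3 : H 0 0 ≤ H 1 1)
    (hb : 0 < H 0 1) (hba : 2 * H 0 1 = H 0 0) (hac : H 0 0 = H 1 1) :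
    latticePointGroup H = ↑({!![1,0;0,1], !![-1,0;0,-1], !![1,1;0,-1], !![-1,-1;0,1], !![0,-1;1,1], !![0,1;1,0], !![0,1;-1,-1], !![0,-1;-1,0], !![1,0;-1,-1], !![1,1;-1,0], !![-1,0;1,1], !![-1,-1;1,0]} : Finset (Matrix (Fin 2) (Fin 2) ℤ)) := by
  ext U
  simp only [Finset.coe_insert, Set.mem_insert_iff, Finset.coe_singleton, Set.mem_singleton_iff]
  rw [mem_iff H hsymm]
  constructor
  · rintro ⟨hdet, e1, e2, e3⟩
    have hcol0 := col0 ha hc h1 h2 h3 (U 0 0) (U 1 0) e1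
    have hy : U 1 0 = -1 ∨ U 1 0 = 0 ∨ U 1 0 = 1 := by
      rcases hcol0 with ⟨-,h⟩|⟨-,h⟩|⟨-,h,-⟩|⟨-,h,-⟩|⟨-,h,-⟩|⟨-,h,-⟩ <;> omega
    have hcol1 := col1 ha hc h1 h2 h3 (U 0 0) (U 1 0) (U 0 1) (U 1 1) hdet hy e3
    have hU := Matrix.eta_fin_two U
    rcases hcol0 with ⟨hx,hyy⟩|⟨hx,hyy⟩|⟨hx,hyy,hac1⟩|⟨hx,hyy,hac1⟩|⟨hx,hyy,hac1,hab1⟩|⟨hx,hyy,hac1,hab1⟩ <;>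
      rcases hcol1 with ⟨hp,hqq⟩|⟨hp,hqq⟩|⟨hp,hqq,hab2⟩|⟨hp,hqq,hab2⟩|⟨hqq,(hp|hp),hac2⟩ <;>
      rw [hx, hyy, hp, hqq] at hU e2 hdet <;>
      first
        | (exfalso; linarith)
        | (exfalso; omega)
        | (exfalso; push_cast at e2; linarith)
        | (rw [hU]; decide)
  · rintro (rfl | rfl | rfl | rfl | rfl | rfl | rfl | rfl | rfl | rfl | rfl | rfl) <;>
      refine ⟨by decide, ?_, ?_, ?_⟩ <;> norm_num <;> linarith

/-- **Rank-2 Bravais test (Corollary 1.5).** For a symmetric positive definite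
reduced Gram matrix `H` (with `0 ≤ 2H₀₁ ≤ H₀₀ ≤ H₁₁`), the point group of the
corresponding rank-2 lattice has order `2`, `4`, `8`, or `12`. -/
theorem pointGroup_card_mem
    (H : Matrix (Fin 2) (Fin 2) ℝ)
    (hsymm : H 1 0 = H 0 1)
    (hpos : H.PosDef)
    (h1 : 0 ≤ 2 * H 0 1) (h2 : 2 * H 0 1 ≤ H 0 0) (h3 : H 0 0 ≤ H 1 1) :
    (latticePointGroup H).ncard ∈ ({2, 4, 8, 12} : Set ℕ) := by
  have ha : 0 < H 0 0 := by
    have := hpos.dotProduct_mulVec_pos (x := ![1,0]) (by intro h; simpa using congrFun h 0)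
    simpa [dotProduct, mulVec, Fin.sum_univ_two] using this
  have hc : 0 < H 1 1 := by
    have := hpos.dotProduct_mulVec_pos (x := ![0,1]) (by intro h; simpa using congrFun h 1)
    simpa [dotProduct, mulVec, Fin.sum_univ_two] using this
  rcases eq_or_lt_of_le h1 with hb | hb
  · have hb0 : H 0 1 = 0 := by linarith
    rcases eq_or_lt_of_le h3 with hac | hac
    · rw [case_square H hsymm ha hc h1 h2 h3 hb0 hac, Set.ncard_coe_finset]
      simp only [Set.mem_insert_iff, Set.mem_singleton_iff]
      right; right; left; decide
    · rw [case_rect H hsymm ha hc h1 h2 h3 hb0 hac, Set.ncard_coe_finset]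
      simp only [Set.mem_insert_iff, Set.mem_singleton_iff]
      right; left; decide
  · have hb' : 0 < H 0 1 := by linarith
    rcases eq_or_lt_of_le h2 with hba | hba
    · rcases eq_or_lt_of_le h3 with hac | hac
      · rw [case_hex H hsymm ha hc h1 h2 h3 hb' hba hac, Set.ncard_coe_finset]
        simp only [Set.mem_insert_iff, Set.mem_singleton_iff]
        right; right; right; decide
      · rw [case_centered H hsymm ha hc h1 h2 h3 hb' hba hac, Set.ncard_coe_finset]
        simp only [Set.mem_insert_iff, Set.mem_singleton_iff]
        right; left; decide
    · rcases eq_or_lt_of_le h3 with hac | hac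
      · rw [case_rhombic H hsymm ha hc h1 h2 h3 hb' hba hac, Set.ncard_coe_finset]
        simp only [Set.mem_insert_iff, Set.mem_singleton_iff]
        right; left; decide
      · rw [case_generic H hsymm ha hc h1 h2 h3 hb' hba hac, Set.ncard_coe_finset]
        simp only [Set.mem_insert_iff, Set.mem_singleton_iff]
        left; decide
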